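/- Let G be an infinite, connected, locally finite vertex-transitive graph and let r ∈ ℕ. Then every path in G that starts at a vertex of the sphere S_r (of radius r around a fixed root o) and ends at a vertex of the sphere S_{2r+1} contains a vertex of the exposed sphere S_r^∞, where S_r^∞ is the set of vertices u ∈ S_r such that there exists an infinite self-avoiding path started at u that never returns to the ball B_r after its first step. -/
import Mathlib
open SimpleGraph

section Aux
variable {V : Type} {G : SimpleGraph V}

lemma aux_adj_dist_le (hconn : G.Connected) {o u c : V} (h : G.Adj u c) :
    G.dist o c ≤ G.dist o u + 1 := by
  have h1 : G.dist u c = 1 := dist_eq_one_iff_adj.mpr h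
  calc G.dist o c ≤ G.dist o u + G.dist u c := hconn.dist_triangle
  _ = G.dist o u + 1 := by rw [h1]

lemma aux_dist_getVert_succ_le {u v : V} (p : G.Walk u v) (j : ℕ) :
    G.dist (p.getVert j) (p.getVert (j + 1)) ≤ 1 := by
  rcases Nat.lt_or_ge j p.length with hj | hj
  · exact le_of_eq (dist_eq_one_iff_adj.mpr (p.adj_getVert_succ hj))
  · rw [p.getVert_of_length_le hj, p.getVert_of_length_le (by omega)]
    simp [SimpleGraph.dist_self]

lemma aux_dist_getVert_le (hconn : G.Connected) {u v : V} (p : G.Walk u v) {i j : ℕ}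
    (hij : i ≤ j) : G.dist (p.getVert i) (p.getVert j) ≤ j - i := by
  induction j, hij using Nat.le_induction with
  | base => simp [SimpleGraph.dist_self]
  | succ j hij ih =>
    have := aux_dist_getVert_succ_le p j
    have htr : G.dist (p.getVert i) (p.getVert (j+1)) ≤
        G.dist (p.getVert i) (p.getVert j) + G.dist (p.getVert j) (p.getVert (j+1)) :=
      hconn.dist_triangle
    omega

lemma aux_geodesic_getVert (hconn : G.Connected) {u v : V} (p : G.Walk u v)
    (hp : p.length = G.dist u v) {i j : ℕ} (hij : i ≤ j) (hj : j ≤ p.length) :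
    G.dist (p.getVert i) (p.getVert j) = j - i := by
  refine le_antisymm (aux_dist_getVert_le hconn p hij) ?_
  have h1 : G.dist u (p.getVert i) ≤ i := by
    have := aux_dist_getVert_le hconn p (Nat.zero_le i)
    simpa [p.getVert_zero] using this
  have h2 : G.dist (p.getVert j) v ≤ p.length - j := by
    have := aux_dist_getVert_le hconn p hj
    simpa [p.getVert_length] using this
  have htr : G.dist u v ≤ G.dist u (p.getVert i) + (G.dist (p.getVert i) (p.getVert j)
      + G.dist (p.getVert j) v) := le_trans hconn.dist_triangle
    (by gcongr; exact hconn.dist_triangle)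
  omega
end Aux

section Aux2
variable {V : Type} {G : SimpleGraph V}

lemma aux_iso_dist (hconn : G.Connected) (φ : G ≃g G) (u v : V) :
    G.dist (φ u) (φ v) = G.dist u v := by
  have key : ∀ (ψ : G ≃g G) (x y : V), G.dist (ψ x) (ψ y) ≤ G.dist x y := by
    intro ψ x y
    obtain ⟨p, hp⟩ := hconn.exists_walk_length_eq_dist x y
    calc G.dist (ψ x) (ψ y) ≤ (p.map ψ.toHom).length := SimpleGraph.dist_le _
    _ = G.dist x y := by rw [SimpleGraph.Walk.length_map, hp]
  refine le_antisymm (key φ u v) ?_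
  have := key φ.symm (φ u) (φ v)
  simpa using this

lemma aux_ball_finite (hconn : G.Connected) (hlf : ∀ v : V, (G.neighborSet v).Finite)
    (x : V) : ∀ n : ℕ, {y | G.dist x y ≤ n}.Finite := by
  intro n
  induction n with
  | zero =>
    refine (Set.finite_singleton x).subset ?_
    intro y hy
    simp only [Set.mem_setOf_eq, Nat.le_zero] at hy
    simp [(hconn.dist_eq_zero_iff.mp hy).symm]
  | succ n ih =>
    have hsub : {y | G.dist x y ≤ n + 1} ⊆
        {y | G.dist x y ≤ n} ∪ ⋃ z ∈ {y | G.dist x y ≤ n}, G.neighborSet z := by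
      intro y hy
      simp only [Set.mem_setOf_eq] at hy
      rcases Nat.lt_or_ge (G.dist x y) (n + 1) with h | h
      · exact Or.inl (Nat.lt_succ_iff.mp h)
      · have hd : G.dist x y = n + 1 := le_antisymm hy h
        obtain ⟨p, hp⟩ := hconn.exists_walk_length_eq_dist x y
        have hn : n < p.length := by omega
        have hadj : G.Adj (p.getVert n) y := by
          have := p.adj_getVert_succ hn
          rwa [show n + 1 = p.length by omega, p.getVert_length] at this
        have hdn : G.dist x (p.getVert n) ≤ n := by
          have := aux_dist_getVert_le hconn p (Nat.zero_le n)
          simpa [p.getVert_zero] using this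
        exact Or.inr (Set.mem_biUnion hdn hadj)
    exact (ih.union (ih.biUnion fun z _ => hlf z)).subset hsub

lemma aux_ivt (hconn : G.Connected) (o : V) {u v : V} (p : G.Walk u v) (n : ℕ)
    (h1 : G.dist o u ≤ n) (h2 : n ≤ G.dist o v) : ∃ z ∈ p.support, G.dist o z = n := by
  revert h1 h2
  induction p with
  | nil => exact fun h1 h2 => ⟨_, by simp, le_antisymm h1 h2⟩
  | @cons u c v hadj q ih =>
    intro h1 h2
    rcases eq_or_lt_of_le h1 with h | h
    · exact ⟨u, by simp, h⟩
    · have hc : G.dist o c ≤ n := by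
        have := aux_adj_dist_le hconn (o := o) hadj
        omega
      obtain ⟨z, hz, hzn⟩ := ih hc h2
      exact ⟨z, by simp [hz], hzn⟩

lemma aux_sphere_nonempty [Infinite V] (hconn : G.Connected)
    (hlf : ∀ v : V, (G.neighborSet v).Finite) (o : V) (n : ℕ) :
    ∃ x : V, G.dist o x = n := by
  have hfin := aux_ball_finite hconn hlf o n
  obtain ⟨x, hx⟩ := hfin.infinite_compl.nonempty
  simp only [Set.mem_compl_iff, Set.mem_setOf_eq, not_le] at hx
  obtain ⟨p⟩ := hconn.preconnected o x
  obtain ⟨z, _, hzn⟩ := aux_ivt hconn o p n (by simp [SimpleGraph.dist_self]) (le_of_lt hx)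
  exact ⟨z, hzn⟩
end Aux2

section Aux3
variable {V : Type} {G : SimpleGraph V}
lemma aux_geodesic_line [Infinite V] (hconn : G.Connected)
    (hlf : ∀ v : V, (G.neighborSet v).Finite)
    (htrans : ∀ u v : V, ∃ φ : G ≃g G, φ u = v) (o b : V) :
    ∃ γ : ℤ → V, γ 0 = b ∧ ∀ i j : ℤ, G.dist (γ i) (γ j) = (j - i).natAbs := by
  have seg : ∀ n : ℕ, ∃ g : ℤ → V, g 0 = b ∧
      ∀ i j : ℤ, -(n:ℤ) ≤ i → i ≤ n → -(n:ℤ) ≤ j → j ≤ n →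
        G.dist (g i) (g j) = (j - i).natAbs := by
    intro n
    obtain ⟨x, hx⟩ := aux_sphere_nonempty hconn hlf o (2 * n)
    obtain ⟨p, hp⟩ := hconn.exists_walk_length_eq_dist o x
    have hL : p.length = 2 * n := by rw [hp, hx]
    obtain ⟨φ, hφ⟩ := htrans (p.getVert n) b
    refine ⟨fun i => φ (p.getVert (n + i).toNat), ?_, ?_⟩
    · show φ (p.getVert ((n:ℤ) + 0).toNat) = b
      simpa using hφ
    · intro i j hi1 hi2 hj1 hj2
      show G.dist (φ _) (φ _) = _
      rw [aux_iso_dist hconn]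
      rcases le_total i j with hij | hij
      · have h := aux_geodesic_getVert hconn p hp
          (i := (n + i).toNat) (j := (n + j).toNat) (by omega) (by omega)
        rw [h]; omega
      · rw [SimpleGraph.dist_comm]
        have h := aux_geodesic_getVert hconn p hp
          (i := (n + j).toNat) (j := (n + i).toNat) (by omega) (by omega)
        rw [h]; omega
  choose g hg0 hgd using seg
  have hcof : ∀ s : Set ℕ, s ∈ Filter.atTop → s ∈ Filter.hyperfilter ℕ := fun s hs =>
    Nat.hyperfilter_le_atTop hs
  have key : ∀ i : ℤ, ∃ v : V, {n : ℕ | g n i = v} ∈ Filter.hyperfilter ℕ := by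
    intro i
    have hball := aux_ball_finite hconn hlf b i.natAbs
    have hsub : {n : ℕ | i.natAbs ≤ n} ⊆
        ⋃ v ∈ {y | G.dist b y ≤ i.natAbs}, {n : ℕ | g n i = v} := by
      intro n hn
      simp only [Set.mem_setOf_eq] at hn
      have hd : G.dist (g n 0) (g n i) = (i - 0).natAbs :=
        hgd n 0 i (by omega) (by omega) (by omega) (by omega)
      rw [hg0 n] at hd
      refine Set.mem_biUnion ?_ rfl
      simp only [Set.mem_setOf_eq]
      rw [hd]; simp
    have hmem : (⋃ v ∈ {y | G.dist b y ≤ i.natAbs}, {n : ℕ | g n i = v}) ∈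
        Filter.hyperfilter ℕ :=
      Filter.mem_of_superset (hcof _ (Filter.mem_atTop _)) hsub
    obtain ⟨v, _, hv⟩ := (Ultrafilter.finite_biUnion_mem_iff hball).mp hmem
    exact ⟨v, hv⟩
  choose γ hγ using key
  have pick : ∀ s : Set ℕ, s ∈ Filter.hyperfilter ℕ → s.Nonempty := fun s hs =>
    Filter.nonempty_of_mem hs
  refine ⟨γ, ?_, ?_⟩
  · obtain ⟨n, hn⟩ := pick _ (hγ 0)
    simp only [Set.mem_setOf_eq] at hn
    rw [← hn, hg0 n]
  · intro i j
    have h3 : {n : ℕ | i.natAbs ≤ n ∧ j.natAbs ≤ n} ∈ Filter.hyperfilter ℕ := by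
      apply hcof
      exact Filter.mem_atTop_sets.mpr ⟨i.natAbs + j.natAbs, fun c hc => by
        simp only [Set.mem_setOf_eq]; omega⟩
    obtain ⟨n, hn⟩ := pick _ (Filter.inter_mem (Filter.inter_mem (hγ i) (hγ j)) h3)
    obtain ⟨⟨hni, hnj⟩, hb1, hb2⟩ := hn
    simp only [Set.mem_setOf_eq] at hni hnj
    rw [← hni, ← hnj]
    exact hgd n i j (by omega) (by omega) (by omega) (by omega)

end Aux3
section Aux4
variable {V : Type} {G : SimpleGraph V}

lemma aux_loop_erase (P : V → Prop) (h : ℕ → V)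
    (hadj : ∀ i, G.Adj (h i) (h (i + 1)))
    (hfin : ∀ v : V, {i | h i = v}.Finite)
    (hP : ∀ i, 1 ≤ i → P (h i)) :
    ∃ f : ℕ → V, f 0 = h 0 ∧ Function.Injective f ∧
      (∀ i, G.Adj (f i) (f (i + 1))) ∧ ∀ i, 1 ≤ i → P (f i) := by
  set N : V → ℕ := fun v => sSup {i | h i = v} with hN
  have hNmem : ∀ i : ℕ, h (N (h i)) = h i := by
    intro i
    have hne : {j | h j = h i}.Nonempty := ⟨i, rfl⟩
    exact Set.Nonempty.csSup_mem hne (hfin (h i))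
  have hNle : ∀ (v : V) (i : ℕ), h i = v → i ≤ N v := fun v i hi =>
    le_csSup (hfin v).bddAbove hi
  set t : ℕ → ℕ := fun k => Nat.rec (N (h 0)) (fun _ tk => N (h (tk + 1))) k with ht
  have htsucc : ∀ k, t (k + 1) = N (h (t k + 1)) := fun k => rfl
  have hstep : ∀ k, h (t (k + 1)) = h (t k + 1) := fun k => hNmem (t k + 1)
  have hht : ∀ k, t k = N (h (t k)) := by
    intro k
    cases k with
    | zero => show N (h 0) = N (h (t 0)); rw [show h (t 0) = h 0 from hNmem 0]
    | succ k =>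
      rw [htsucc k, hstep k]
  have hlt : ∀ k, t k < t (k + 1) := by
    intro k
    have := hNle (h (t k + 1)) (t k + 1) rfl
    rw [← htsucc k] at this
    omega
  have hmono : StrictMono t := strictMono_nat_of_lt_succ hlt
  have hkey : ∀ j k, j < k → h (t j) = h (t k) → False := by
    intro j k hjk heq
    have h1 : t k ≤ N (h (t j)) := hNle _ _ heq.symm
    rw [← hht j] at h1
    exact absurd (hmono hjk) (by omega)
  refine ⟨fun k => h (t k), hNmem 0, ?_, ?_, ?_⟩
  · intro j k hjk
    rcases lt_trichotomy j k with hc | hc | hc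
    · exact absurd (hkey j k hc hjk) (by simp)
    · exact hc
    · exact absurd (hkey k j hc hjk.symm) (by simp)
  · intro k
    show G.Adj (h (t k)) (h (t (k + 1)))
    rw [hstep k]
    exact hadj (t k)
  · intro k hk
    have : 1 ≤ t k := by
      have := hmono (show 0 < k by omega)
      omega
    exact hP (t k) this

lemma aux_split (hconn : G.Connected) (o : V) (r : ℕ) {u b : V} (hb : r < G.dist o b)
    (w : G.Walk u b) :
    (∀ i, r < G.dist o (w.getVert i)) ∨
      ∃ z ∈ w.support, G.dist o z = r ∧
        ∃ w₂ : G.Walk z b, ∀ i, 1 ≤ i → r < G.dist o (w₂.getVert i) := by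
  revert hb
  induction w with
  | nil =>
    intro hb
    left; intro i
    rw [SimpleGraph.Walk.getVert_of_length_le _ (by simp)]
    exact hb
  | @cons u c b' hadj q ih =>
    intro hb
    rcases ih hb with hq | ⟨z, hz, hzr, w₂, hw₂⟩
    · by_cases hu : r < G.dist o u
      · left
        intro i
        cases i with
        | zero => simpa [SimpleGraph.Walk.getVert_zero] using hu
        | succ i => rw [SimpleGraph.Walk.getVert_cons_succ]; exact hq i
      · right
        have hc := hq 0
        rw [q.getVert_zero] at hc
        have h2 : G.dist o c ≤ G.dist o u + 1 := aux_adj_dist_le hconn hadj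
        refine ⟨u, by simp, by omega, SimpleGraph.Walk.cons hadj q, ?_⟩
        intro i hi
        obtain ⟨j, rfl⟩ : ∃ j, i = j + 1 := ⟨i - 1, by omega⟩
        rw [SimpleGraph.Walk.getVert_cons_succ]
        exact hq j
    · right
      exact ⟨z, by simp [hz], hzr, w₂, hw₂⟩
end Aux4
/-- In an infinite, connected, locally finite, vertex-transitive graph, every path from
the sphere `S_r` to the sphere `S_{2r+1}` contains a vertex of the exposed sphere
`S_r^∞`, i.e. a vertex `z` with `d(o,z) = r` admitting an infinite self-avoiding path
started at `z` that never returns to the ball `B_r` after its first step. -/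
theorem path_meets_exposed_sphere (V : Type) [Infinite V] (G : SimpleGraph V)
    (hconn : G.Connected) (hlf : ∀ v : V, (G.neighborSet v).Finite)
    (htrans : ∀ u v : V, ∃ φ : G ≃g G, φ u = v)
    (o : V) (r : ℕ) (a b : V) (ha : G.dist o a = r) (hb : G.dist o b = 2 * r + 1)
    (w : G.Walk a b) :
    ∃ z ∈ w.support, G.dist o z = r ∧
      ∃ f : ℕ → V, f 0 = z ∧ Function.Injective f ∧
        (∀ i, G.Adj (f i) (f (i + 1))) ∧ ∀ i, 1 ≤ i → r < G.dist o (f i) := by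
  have hb' : r < G.dist o b := by omega
  rcases aux_split hconn o r hb' w with hL | ⟨z, hz, hzr, w₂, hw₂⟩
  · exfalso
    have := hL 0
    rw [w.getVert_zero, ha] at this
    omega
  refine ⟨z, hz, hzr, ?_⟩
  obtain ⟨γ, hγ0, hγd⟩ := aux_geodesic_line hconn hlf htrans o b
  have hdb : ∀ i : ℤ, G.dist (γ i) b = i.natAbs := by
    intro i
    have h := hγd i 0
    rw [hγ0] at h
    have h2 : ((0 : ℤ) - i).natAbs = i.natAbs := by omega
    rw [h, h2]
  have hlow : ∀ i : ℤ, 2 * r + 1 ≤ G.dist o (γ i) + i.natAbs := by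
    intro i
    have h1 : G.dist o b ≤ G.dist o (γ i) + G.dist (γ i) b := hconn.dist_triangle
    rw [hb, hdb i] at h1
    omega
  have hside : (∀ i : ℕ, r < G.dist o (γ (i : ℤ))) ∨
      (∀ i : ℕ, r < G.dist o (γ (-(i : ℤ)))) := by
    by_contra hcon
    push_neg at hcon
    obtain ⟨⟨i, hi⟩, j, hj⟩ := hcon
    have hij : G.dist (γ (-(j : ℤ))) (γ (i : ℤ)) = ((i : ℤ) - (-(j : ℤ))).natAbs := hγd _ _
    have htr : G.dist (γ (-(j : ℤ))) (γ (i : ℤ)) ≤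
        G.dist (γ (-(j : ℤ))) o + G.dist o (γ (i : ℤ)) := hconn.dist_triangle
    rw [SimpleGraph.dist_comm (u := γ (-(j : ℤ))) (v := o)] at htr
    have l1 := hlow (i : ℤ)
    have l2 := hlow (-(j : ℤ))
    rw [hij] at htr
    omega
  obtain ⟨ρ, hρ0, hρd, hρr⟩ : ∃ ρ : ℕ → V, ρ 0 = b ∧
      (∀ i j : ℕ, G.dist (ρ i) (ρ j) = ((j : ℤ) - (i : ℤ)).natAbs) ∧
      ∀ i : ℕ, r < G.dist o (ρ i) := by
    rcases hside with hs | hs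
    · exact ⟨fun i => γ (i : ℤ), by simpa using hγ0, fun i j => hγd _ _, hs⟩
    · refine ⟨fun i => γ (-(i : ℤ)), by simpa using hγ0, fun i j => ?_, hs⟩
      have h2 : ((-(j : ℤ)) - (-(i : ℤ))).natAbs = ((j : ℤ) - (i : ℤ)).natAbs := by omega
      rw [hγd, h2]
  have hρinj : ∀ i j : ℕ, ρ i = ρ j → i = j := by
    intro i j hE
    have hd := hρd i j
    rw [hE, SimpleGraph.dist_self] at hd
    omega
  have hρadj : ∀ i : ℕ, G.Adj (ρ i) (ρ (i + 1)) := by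
    intro i
    rw [← SimpleGraph.dist_eq_one_iff_adj, hρd]
    omega
  set L := w₂.length with hLdef
  have hzb : z ≠ b := by intro hE; rw [hE, hb] at hzr; omega
  have hLpos : 0 < L := by
    rcases Nat.eq_zero_or_pos L with h0 | h
    · exact absurd (SimpleGraph.Walk.eq_of_length_eq_zero h0) hzb
    · exact h
  set h : ℕ → V := fun i => if i < L then w₂.getVert i else ρ (i - L) with hh
  have hhval_lt : ∀ i, i < L → h i = w₂.getVert i := fun i hi => by simp [hh, hi]
  have hhval_ge : ∀ i, L ≤ i → h i = ρ (i - L) := fun i hi => by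
    simp [hh, Nat.not_lt.mpr hi]
  have hh0 : h 0 = z := by rw [hhval_lt 0 hLpos, w₂.getVert_zero]
  have hadjh : ∀ i, G.Adj (h i) (h (i + 1)) := by
    intro i
    rcases Nat.lt_or_ge (i + 1) L with hc | hc
    · rw [hhval_lt i (by omega), hhval_lt (i + 1) hc]
      exact w₂.adj_getVert_succ (by omega)
    · rcases Nat.lt_or_ge i L with hc2 | hc2
      · rw [hhval_lt i hc2, hhval_ge (i + 1) (by omega)]
        have hE : ρ (i + 1 - L) = w₂.getVert (i + 1) := by
          rw [show i + 1 - L = 0 by omega, hρ0,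
            show i + 1 = w₂.length by omega, w₂.getVert_length]
        rw [hE]
        exact w₂.adj_getVert_succ (by omega)
      · rw [hhval_ge i hc2, hhval_ge (i + 1) (by omega),
          show i + 1 - L = (i - L) + 1 by omega]
        exact hρadj (i - L)
  have hfinh : ∀ v : V, {i | h i = v}.Finite := by
    intro v
    have hsub : {i | h i = v} ⊆ Set.Iio L ∪ {i | L ≤ i ∧ h i = v} := by
      intro i hi
      rcases Nat.lt_or_ge i L with hc | hc
      · exact Or.inl hc
      · exact Or.inr ⟨hc, hi⟩
    refine ((Set.finite_Iio L).union ?_).subset hsub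
    apply Set.Subsingleton.finite
    intro i hi j hj
    obtain ⟨hi1, hi2⟩ := hi
    obtain ⟨hj1, hj2⟩ := hj
    rw [hhval_ge i hi1] at hi2
    rw [hhval_ge j hj1] at hj2
    have := hρinj (i - L) (j - L) (by rw [hi2, hj2])
    omega
  have hPh : ∀ i, 1 ≤ i → r < G.dist o (h i) := by
    intro i hi
    rcases Nat.lt_or_ge i L with hc | hc
    · rw [hhval_lt i hc]; exact hw₂ i hi
    · rw [hhval_ge i hc]; exact hρr (i - L)
  obtain ⟨f, hf0, hfinj, hfadj, hfP⟩ :=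
    aux_loop_erase (fun v => r < G.dist o v) h hadjh hfinh hPh
  exact ⟨f, by rw [hf0, hh0], hfinj, hfadj, hfP⟩
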